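/- For every domain D ⊆ ℂ and n ≥ 2, the domain S_n(D) ⊆ ℂ^n is linearly convex: for every point w ∈ ℂ^n \ S_n(D) there exists a complex affine hyperplane through w disjoint from S_n(D). -/

import Mathlib

open Polynomial

/-- The symmetrization map `π_n : ℂ^n → ℂ^n`, whose `j`-th coordinate is the
`(j+1)`-st elementary symmetric polynomial of the entries. -/
noncomputable def symPoly (n : ℕ) (lam : Fin n → ℂ) : Fin n → ℂ :=
  fun j => ∑ t ∈ Finset.powersetCard ((j : ℕ) + 1) Finset.univ, ∏ i ∈ t, lam i

/-- The `n`-fold symmetric product `S_n(D) = π_n(D^n)` of a planar set `D`. -/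
noncomputable def symProd (n : ℕ) (D : Set ℂ) : Set (Fin n → ℂ) :=
  symPoly n '' {lam | ∀ i, lam i ∈ D}

/-- The monic polynomial of degree `n` whose coefficients (up to sign) are
given by the tuple `w`. -/
noncomputable def pwAux (n : ℕ) (w : Fin n → ℂ) : ℂ[X] :=
  X ^ n + ∑ j : Fin n, C ((-1 : ℂ) ^ ((j : ℕ) + 1) * w j) * X ^ (n - 1 - (j : ℕ))

lemma symPoly_prod_eq (n : ℕ) (lam : Fin n → ℂ) :
    ∏ i : Fin n, (X - C (lam i)) = pwAux n (symPoly n lam) := by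
  have h := Multiset.prod_X_sub_X_eq_sum_esymm (Finset.univ.val.map lam)
  have hcard : Multiset.card (Finset.univ.val.map lam) = n := by simp
  rw [hcard] at h
  rw [Multiset.map_map] at h
  have hl : (Multiset.map ((fun t => X - C t) ∘ lam) Finset.univ.val).prod
      = ∏ i : Fin n, (X - C (lam i)) := rfl
  rw [hl] at h
  rw [pwAux, h, Finset.sum_range_succ']
  have e0 : (Finset.univ.val.map lam).esymm 0 = 1 := by simp [Multiset.esymm]
  rw [e0]
  simp only [pow_zero, one_mul, map_one, Nat.sub_zero]
  rw [add_comm]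
  congr 1
  have hrhs : ∀ j : Fin n, C ((-1 : ℂ) ^ ((j : ℕ) + 1) * symPoly n lam j)
        * X ^ (n - 1 - (j : ℕ))
      = (fun k : ℕ => C ((-1 : ℂ) ^ (k + 1) *
          ∑ t ∈ Finset.powersetCard (k + 1) Finset.univ, ∏ i ∈ t, lam i)
        * X ^ (n - 1 - k)) (j : ℕ) := fun j => rfl
  rw [Finset.sum_congr rfl (fun j _ => hrhs j),
    Fin.sum_univ_eq_sum_range (fun k : ℕ => C ((-1 : ℂ) ^ (k + 1) *
          ∑ t ∈ Finset.powersetCard (k + 1) Finset.univ, ∏ i ∈ t, lam i)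
        * X ^ (n - 1 - k)) n]
  apply Finset.sum_congr rfl
  intro j hj
  have he : (Finset.univ.val.map lam).esymm (j + 1)
      = ∑ t ∈ Finset.powersetCard (j + 1) Finset.univ, ∏ i ∈ t, lam i := by
    rw [Finset.esymm_map_val]
  have hn1 : n - (j + 1) = n - 1 - j := by omega
  rw [he, hn1, map_mul, map_pow, map_neg, map_one]
  ring

lemma pwAux_coeff (n : ℕ) (w : Fin n → ℂ) (j : Fin n) :
    (pwAux n w).coeff (n - 1 - (j : ℕ)) = (-1 : ℂ) ^ ((j : ℕ) + 1) * w j := by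
  have hj := j.2
  rw [pwAux, coeff_add, coeff_X_pow, if_neg (by omega), finset_sum_coeff]
  simp only [coeff_C_mul, coeff_X_pow]
  rw [Finset.sum_eq_single j]
  · rw [if_pos rfl, mul_one, zero_add]
  · intro k _ hkj
    rw [if_neg (by intro h; apply hkj; ext; have := k.2; omega), mul_zero]
  · intro h; exact absurd (Finset.mem_univ j) h

lemma pwAux_inj (n : ℕ) (w w' : Fin n → ℂ) (h : pwAux n w = pwAux n w') : w = w' := by
  funext j
  have := congrArg (fun p => Polynomial.coeff p (n - 1 - (j : ℕ))) h
  simp only [pwAux_coeff n] at this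
  have hne : ((-1 : ℂ) ^ ((j : ℕ) + 1)) ≠ 0 := by simp
  exact mul_left_cancel₀ hne this

lemma pwAux_monic (n : ℕ) (hn : 1 ≤ n) (w : Fin n → ℂ) : (pwAux n w).Monic := by
  apply (monic_X_pow n).add_of_left
  apply lt_of_le_of_lt (degree_sum_le _ _)
  rw [degree_X_pow, Finset.sup_lt_iff (by exact_mod_cast WithBot.bot_lt_coe n)]
  intro j _
  apply lt_of_le_of_lt (degree_C_mul_X_pow_le _ _)
  exact_mod_cast Nat.lt_of_le_of_lt (Nat.sub_le _ _) (by omega : n - 1 < n)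

lemma pwAux_natDegree (n : ℕ) (hn : 1 ≤ n) (w : Fin n → ℂ) :
    (pwAux n w).natDegree = n := by
  have h : (pwAux n w).degree = n := by
    rw [pwAux, degree_add_eq_left_of_degree_lt]
    · exact degree_X_pow n
    · rw [degree_X_pow]
      apply lt_of_le_of_lt (degree_sum_le _ _)
      rw [Finset.sup_lt_iff (by exact_mod_cast WithBot.bot_lt_coe n)]
      intro j _
      apply lt_of_le_of_lt (degree_C_mul_X_pow_le _ _)
      exact_mod_cast Nat.lt_of_le_of_lt (Nat.sub_le _ _) (by omega : n - 1 < n)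
  exact natDegree_eq_of_degree_eq_some h

lemma pwAux_exists_roots (n : ℕ) (hn : 1 ≤ n) (w : Fin n → ℂ) :
    ∃ μ : Fin n → ℂ, symPoly n μ = w ∧ pwAux n w = ∏ i : Fin n, (X - C (μ i)) := by
  have hsplits : (pwAux n w).Splits := IsAlgClosed.splits _
  have hcard : Multiset.card (pwAux n w).roots = n := by
    exact ((splits_iff_card_roots).mp hsplits).trans (pwAux_natDegree n hn w)
  have hfact := hsplits.eq_prod_roots_of_monic (pwAux_monic n hn w)
  set l := (pwAux n w).roots.toList with hl
  have hlen : l.length = n := by rw [hl, Multiset.length_toList, hcard]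
  set μ : Fin n → ℂ := fun i => l.get (Fin.cast hlen.symm i) with hμ
  have hml : ((pwAux n w).roots : Multiset ℂ) = ↑(List.ofFn μ) := by
    rw [← Multiset.coe_toList (pwAux n w).roots, ← hl]
    congr 1
    rw [hμ, List.ofFn_congr hlen.symm]
    exact (List.ofFn_get l).symm
  have hprod : pwAux n w = ∏ i : Fin n, (X - C (μ i)) := by
    rw [hfact, hml, Multiset.map_coe, Multiset.prod_coe, List.map_ofFn, List.prod_ofFn]
    rfl
  refine ⟨μ, ?_, hprod⟩
  apply pwAux_inj n
  rw [← symPoly_prod_eq, ← hprod]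

lemma pwAux_eval (n : ℕ) (w : Fin n → ℂ) (z : ℂ) :
    (pwAux n w).eval z
      = z ^ n + ∑ j : Fin n, ((-1 : ℂ) ^ ((j : ℕ) + 1) * z ^ (n - 1 - (j : ℕ))) * w j := by
  rw [pwAux]
  simp only [eval_add, eval_pow, eval_X, eval_finset_sum, eval_mul, eval_C]
  congr 1
  apply Finset.sum_congr rfl
  intro j _
  ring

/-- `S_n(D)` is linearly convex: every point of the complement lies on a
complex affine hyperplane disjoint from `S_n(D)`. -/
theorem symProd_linearly_convex (n : ℕ) (hn : 2 ≤ n) (D : Set ℂ)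
    (hDopen : IsOpen D) (hDconn : IsConnected D) :
    ∀ w : Fin n → ℂ, w ∉ symProd n D →
      ∃ a : Fin n → ℂ, a ≠ 0 ∧ ∃ b : ℂ,
        (∑ i, a i * w i) = b ∧ ∀ v ∈ symProd n D, (∑ i, a i * v i) ≠ b := by
  intro w hw
  have hn1 : 1 ≤ n := by omega
  obtain ⟨μ, hμw, hfact⟩ := pwAux_exists_roots n hn1 w
  have hζ : ∃ i, μ i ∉ D := by
    by_contra h
    push_neg at h
    exact hw ⟨μ, h, hμw⟩
  obtain ⟨i0, hi0⟩ := hζ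
  set ζ := μ i0 with hζdef
  refine ⟨fun j => (-1 : ℂ) ^ ((j : ℕ) + 1) * ζ ^ (n - 1 - (j : ℕ)), ?_, -ζ ^ n, ?_, ?_⟩
  · intro h0
    have := congrFun h0 ⟨n - 1, by omega⟩
    simp only [Pi.zero_apply] at this
    have h1 : (n : ℕ) - 1 - ((⟨n - 1, by omega⟩ : Fin n) : ℕ) = 0 := by simp
    rw [h1, pow_zero, mul_one] at this
    exact pow_ne_zero _ (by norm_num : (-1 : ℂ) ≠ 0) this
  · have heval : (pwAux n w).eval ζ = 0 := by
      rw [hfact, eval_prod]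
      exact Finset.prod_eq_zero (Finset.mem_univ i0) (by simp [hζdef])
    have := pwAux_eval n w ζ
    rw [heval] at this
    linear_combination -this
  · rintro v ⟨lam, hlam, rfl⟩
    have hev : (pwAux n (symPoly n lam)).eval ζ = ∏ i : Fin n, (ζ - lam i) := by
      rw [← symPoly_prod_eq, eval_prod]
      simp
    have hne : ∏ i : Fin n, (ζ - lam i) ≠ 0 := by
      apply Finset.prod_ne_zero_iff.mpr
      intro i _
      intro h
      apply hi0
      rw [hζdef] at h ⊢
      rw [sub_eq_zero] at h
      rw [h]; exact hlam i
    have := pwAux_eval n (symPoly n lam) ζ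
    rw [hev] at this
    intro hcontra
    apply hne
    linear_combination this + hcontra
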